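/- arXiv:1810.13045 — 2 statements merged into one kernel-verified Lean document; each statement's English description precedes it below -/
import Mathlib

section
/- Define p : [0,2π] → [2,3] by p(θ) = 3 for θ ∈ [0,π/3] ∪ [5π/3,2π], p(θ) = cos θ + 5/2 for θ ∈ (π/3,2π/3) ∪ (4π/3,5π/3), and p(θ) = 2 for θ ∈ [2π/3,4π/3]. Let 2 < q ≤ 3 and ε > 0 satisfy 1/q + ε < 1/2. Then sup_{0≤r<1} ∫₀^{2π} |1 + re^{iθ}|^{−(1/q+ε)·p(θ)} dθ < ∞; i.e., the analytic function f(z) = (1+z)^{−1/q−ε} belongs to the variable exponent Hardy space H^{p(·)}(𝔻). -/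
open MeasureTheory Complex
open scoped ENNReal

/-- The example exponent: `p(θ) = 3` on `[0,π/3] ∪ [5π/3,2π]`,
`p(θ) = cos θ + 5/2` on `(π/3,2π/3) ∪ (4π/3,5π/3)`, and `p(θ) = 2` on `[2π/3,4π/3]`. -/
noncomputable def pEx (θ : ℝ) : ℝ :=
  if θ ≤ Real.pi/3 then 3
  else if θ < 2*Real.pi/3 then Real.cos θ + 5/2
  else if θ ≤ 4*Real.pi/3 then 2
  else if θ < 5*Real.pi/3 then Real.cos θ + 5/2
  else 3

lemma pEx_bounds (θ : ℝ) : 3/2 ≤ pEx θ ∧ pEx θ ≤ 7/2 := by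
  have h1 := Real.neg_one_le_cos θ
  have h2 := Real.cos_le_one θ
  unfold pEx
  split_ifs <;> constructor <;> linarith

lemma pEx_mid {θ : ℝ} (h1 : 2*Real.pi/3 ≤ θ) (h2 : θ ≤ 4*Real.pi/3) : pEx θ = 2 := by
  have hpi := Real.pi_pos
  unfold pEx
  rw [if_neg (by linarith), if_neg (by linarith), if_pos h2]

lemma cos_ge {θ : ℝ} (hθ1 : 0 < θ) (hθ2 : θ ≤ 2*Real.pi)
    (hout : θ < 2*Real.pi/3 ∨ 4*Real.pi/3 < θ) : -(1/2) ≤ Real.cos θ := by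
  have hpi := Real.pi_pos
  have hc : Real.cos (2*Real.pi/3) = -(1/2) := by
    rw [show (2*Real.pi/3) = Real.pi - Real.pi/3 by ring, Real.cos_pi_sub,
      Real.cos_pi_div_three]
  rcases hout with h | h
  · rw [← hc]
    exact Real.cos_le_cos_of_nonneg_of_le_pi (le_of_lt hθ1) (by linarith) (le_of_lt h)
  · rw [← Real.cos_two_pi_sub, ← hc]
    exact Real.cos_le_cos_of_nonneg_of_le_pi (by linarith) (by linarith) (by linarith)
open MeasureTheory Complex
open scoped ENNReal

lemma absEq (r θ : ℝ) :
    ‖1 + (r : ℂ) * Complex.exp (θ * Complex.I)‖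
      = Real.sqrt (1 + 2*r*Real.cos θ + r^2) := by
  have h1 : (1 : ℂ) + (r:ℂ) * Complex.exp (θ * Complex.I)
      = ((1 + r*Real.cos θ : ℝ) : ℂ) + ((r*Real.sin θ : ℝ) : ℂ) * Complex.I := by
    rw [Complex.exp_mul_I, ← Complex.ofReal_cos, ← Complex.ofReal_sin]
    push_cast; ring
  rw [h1, Complex.norm_add_mul_I]
  congr 1
  nlinarith [Real.sin_sq_add_cos_sq θ]

lemma key {q ε : ℝ} (hq1 : 2 < q) (hε : 0 < ε) (h : 1/q + ε < 1/2)
    {r : ℝ} (hr0 : 0 ≤ r) (hr1 : r < 1) {θ : ℝ} (hθ : θ ∈ Set.Ioc (0:ℝ) (2*Real.pi)) :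
    ENNReal.ofReal
        ((‖1 + (r : ℂ) * Complex.exp (θ * Complex.I)‖)
          ^ (-((1/q + ε) * pEx θ)))
      ≤ 4 + 2 * (ENNReal.ofReal |θ - Real.pi|) ^ (-((1/q + ε) * 2)) := by
  have hpi := Real.pi_pos
  have hq0 : (0:ℝ) < q := by linarith
  have hqe : 0 < 1/q + ε := by positivity
  set s : ℝ := (1/q + ε) * 2 with hs
  have hs0 : 0 < s := by positivity
  have hs1 : s < 1 := by rw [hs]; linarith
  rw [absEq]
  set b : ℝ := Real.sqrt (1 + 2*r*Real.cos θ + r^2) with hb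
  by_cases hmid : θ ∈ Set.Icc (2*Real.pi/3) (4*Real.pi/3)
  · -- middle: pEx θ = 2
    rw [pEx_mid hmid.1 hmid.2]
    by_cases hpieq : θ = Real.pi
    · have : (ENNReal.ofReal |θ - Real.pi|) ^ (-s) = ⊤ := by
        rw [hpieq, sub_self, abs_zero, ENNReal.ofReal_zero,
          ENNReal.zero_rpow_of_neg (by linarith)]
      rw [this]
      simp [ENNReal.mul_top]
    · set x : ℝ := |θ - Real.pi| with hx
      have hx0 : 0 < x := abs_pos.mpr (sub_ne_zero.mpr hpieq)
      have hx2 : x ≤ Real.pi/2 := by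
        rw [hx, abs_sub_le_iff]; constructor <;> [skip; skip] <;>
          · have := hmid.1; have := hmid.2; linarith
      -- |sin θ| ≥ 2/π * x
      have hsin : 2/Real.pi * x ≤ |Real.sin θ| := by
        have h1 : Real.sin x ≤ |Real.sin θ| := by
          rcases le_or_gt Real.pi θ with hge | hlt
          · have hxval : x = θ - Real.pi := abs_of_nonneg (by linarith)
            rw [hxval, Real.sin_sub_pi]
            exact neg_le_abs _
          · have hxval : x = Real.pi - θ := by
              rw [hx, abs_of_nonpos (by linarith)]; ring
            rw [hxval, Real.sin_pi_sub]
            exact le_abs_self _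
        exact le_trans (Real.mul_le_sin (le_of_lt hx0) hx2) h1
      have hsx : 0 < 2/Real.pi * x := by positivity
      have hbge : 2/Real.pi * x ≤ b := by
        have h2 : |Real.sin θ| ≤ b := by
          rw [hb, ← Real.sqrt_sq_eq_abs (Real.sin θ)]
          apply Real.sqrt_le_sqrt
          nlinarith [Real.sin_sq_add_cos_sq θ, sq_nonneg (Real.cos θ + r)]
        linarith
      have hrpow : b ^ (-s) ≤ 2 * x ^ (-s) := by
        have h3 : b ^ (-s) ≤ (2/Real.pi * x) ^ (-s) :=
          Real.rpow_le_rpow_of_nonpos hsx hbge (by linarith)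
        have h4 : (2/Real.pi * x) ^ (-s) = (2/Real.pi) ^ (-s) * x ^ (-s) :=
          Real.mul_rpow (by positivity) (le_of_lt hx0)
        have h5 : (2/Real.pi) ^ (-s) ≤ 2 := by
          have hle1 : (2/Real.pi : ℝ) ≤ 1 := by
            rw [div_le_one hpi]; linarith [Real.two_le_pi]
          have h6 : (2/Real.pi : ℝ) ≤ (2/Real.pi) ^ s := by
            simpa using
              Real.rpow_le_rpow_of_exponent_ge (x := 2/Real.pi) (y := 1) (z := s)
                (by positivity) hle1 (le_of_lt hs1)
          rw [Real.rpow_neg (by positivity)]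
          have h7 : ((2/Real.pi : ℝ) ^ s)⁻¹ ≤ (2/Real.pi)⁻¹ := inv_anti₀ (by positivity) h6
          have h8 : ((2:ℝ)/Real.pi)⁻¹ ≤ 2 := by
            rw [inv_div, div_le_iff₀ (by norm_num)]
            linarith [Real.pi_le_four]
          linarith
        calc b ^ (-s) ≤ (2/Real.pi) ^ (-s) * x ^ (-s) := h4 ▸ h3
          _ ≤ 2 * x ^ (-s) := by
              apply mul_le_mul_of_nonneg_right h5 (Real.rpow_nonneg (le_of_lt hx0) _)
      calc ENNReal.ofReal (b ^ (-s)) ≤ ENNReal.ofReal (2 * x ^ (-s)) :=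
            ENNReal.ofReal_le_ofReal hrpow
        _ = 2 * ENNReal.ofReal (x ^ (-s)) := by
            rw [ENNReal.ofReal_mul (by norm_num)]; norm_num
        _ = 2 * (ENNReal.ofReal x) ^ (-s) := by
            rw [ENNReal.ofReal_rpow_of_pos hx0]
        _ ≤ 4 + 2 * (ENNReal.ofReal x) ^ (-s) := le_add_self
  · -- outside: cos θ ≥ -1/2
    have hout : θ < 2*Real.pi/3 ∨ 4*Real.pi/3 < θ := by
      rcases not_and_or.mp (Set.mem_Icc.not.mp hmid) with h' | h'
      · exact Or.inl (lt_of_not_ge h')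
      · exact Or.inr (lt_of_not_ge h')
    have hcos : -(1/2) ≤ Real.cos θ := cos_ge hθ.1 hθ.2 hout
    have hb2 : (1/2 : ℝ) ≤ b := by
      rw [hb, show (1/2:ℝ) = Real.sqrt ((1/2)^2) from (Real.sqrt_sq (by norm_num)).symm]
      apply Real.sqrt_le_sqrt
      nlinarith
    set a : ℝ := (1/q + ε) * pEx θ with ha
    have hp := pEx_bounds θ
    have ha0 : 0 < a := by
      apply mul_pos hqe; linarith [hp.1]
    have ha2 : a ≤ 2 := by
      rw [ha]
      calc (1/q + ε) * pEx θ ≤ (1/2) * (7/2) := by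
            apply mul_le_mul (le_of_lt h) hp.2 (by linarith [hp.1]) (by norm_num)
        _ ≤ 2 := by norm_num
    have hkey : b ^ (-a) ≤ 4 := by
      have h3 : b ^ (-a) ≤ (1/2 : ℝ) ^ (-a) :=
        Real.rpow_le_rpow_of_nonpos (by norm_num) hb2 (by linarith)
      have h4 : (1/2 : ℝ) ^ (-a) = 2 ^ a := by
        rw [show (1/2 : ℝ) = 2⁻¹ by norm_num, Real.inv_rpow (by norm_num),
          Real.rpow_neg (by norm_num), inv_inv]
      have h5 : (2:ℝ) ^ a ≤ 2 ^ (2:ℝ) :=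
        Real.rpow_le_rpow_of_exponent_le (by norm_num) ha2
      have h6 : (2:ℝ) ^ (2:ℝ) = 4 := by
        rw [show (2:ℝ) = ((2:ℕ):ℝ) from by norm_num, Real.rpow_natCast]; norm_num
      calc b ^ (-a) ≤ 2 ^ a := h4 ▸ h3
        _ ≤ 4 := h6 ▸ h5
    calc ENNReal.ofReal (b ^ (-a)) ≤ ENNReal.ofReal 4 := ENNReal.ofReal_le_ofReal hkey
      _ = 4 := by norm_num
      _ ≤ _ := le_self_add

lemma integrableOn_abs_rpow {s : ℝ} (hs0 : 0 < s) (hs1 : s < 1) :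
    IntegrableOn (fun θ : ℝ => |θ - Real.pi| ^ (-s)) (Set.Ioc 0 (2*Real.pi)) := by
  have hpi := Real.pi_pos
  have hsneg : (-1:ℝ) < -s := by linarith
  have i1 : IntervalIntegrable (fun x : ℝ => x ^ (-s)) volume 0 Real.pi :=
    intervalIntegral.intervalIntegrable_rpow' hsneg
  have i1' : IntervalIntegrable (fun x : ℝ => x ^ (-s)) volume 0 (2*Real.pi - Real.pi) := by
    rw [show 2*Real.pi - Real.pi = Real.pi by ring]; exact i1
  -- left piece
  have i2 : IntegrableOn (fun θ : ℝ => (Real.pi - θ) ^ (-s)) (Set.Ioc 0 Real.pi) := by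
    have := (i1.comp_sub_left Real.pi).symm
    rw [sub_self, sub_zero] at this
    exact (intervalIntegrable_iff_integrableOn_Ioc_of_le (le_of_lt hpi)).mp this
  -- right piece
  have i3 : IntegrableOn (fun θ : ℝ => (θ - Real.pi) ^ (-s)) (Set.Ioc Real.pi (2*Real.pi)) := by
    have := i1'.comp_sub_right Real.pi
    rw [zero_add, sub_add_cancel] at this
    exact (intervalIntegrable_iff_integrableOn_Ioc_of_le (by linarith)).mp this
  have i2' : IntegrableOn (fun θ : ℝ => |θ - Real.pi| ^ (-s)) (Set.Ioc 0 Real.pi) := by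
    apply i2.congr_fun ?_ measurableSet_Ioc
    intro θ hθ
    simp only
    rw [abs_of_nonpos (by linarith [hθ.2]), neg_sub]
  have i3' : IntegrableOn (fun θ : ℝ => |θ - Real.pi| ^ (-s)) (Set.Ioc Real.pi (2*Real.pi)) := by
    apply i3.congr_fun ?_ measurableSet_Ioc
    intro θ hθ
    simp only
    rw [_root_.abs_of_nonneg (by linarith [hθ.1] : (0:ℝ) ≤ θ - Real.pi)]
  have : Set.Ioc (0:ℝ) (2*Real.pi) = Set.Ioc 0 Real.pi ∪ Set.Ioc Real.pi (2*Real.pi) :=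
    (Set.Ioc_union_Ioc_eq_Ioc (le_of_lt hpi) (by linarith)).symm
  rw [this]
  exact i2'.union i3'

/-- for `2 < q ≤ 3` and `ε > 0` with `1/q + ε < 1/2`,
`sup_{0 ≤ r < 1} ∫₀^{2π} |1 + re^{iθ}|^{-(1/q+ε) p(θ)} dθ < ∞`, i.e. the analytic
function `f(z) = (1+z)^{-1/q-ε}` belongs to `H^{p(·)}(𝔻)` for the exponent `pEx`. -/
theorem stmt9 (q ε : ℝ) (hq1 : 2 < q) (hq2 : q ≤ 3) (hε : 0 < ε)
    (h : 1/q + ε < 1/2) :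
    (⨆ r ∈ Set.Ico (0:ℝ) 1,
      ∫⁻ θ in Set.Ioc (0:ℝ) (2*Real.pi),
        ENNReal.ofReal
          ((‖(1 + (r : ℂ) * Complex.exp (θ * Complex.I))‖)
            ^ (-((1/q + ε) * pEx θ)))) < ⊤ := by
  have hpi := Real.pi_pos
  have hq0 : (0:ℝ) < q := by linarith
  have hqe : 0 < 1/q + ε := by positivity
  set s : ℝ := (1/q + ε) * 2 with hs
  have hs0 : 0 < s := by positivity
  have hs1 : s < 1 := by rw [hs]; linarith
  set G : ℝ → ℝ≥0∞ := fun θ => 4 + 2 * (ENNReal.ofReal |θ - Real.pi|) ^ (-s) with hG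
  have hGmeas : Measurable G := by
    rw [hG]
    apply Measurable.const_add
    apply Measurable.const_mul
    apply Measurable.pow_const
    exact (measurable_id.sub_const Real.pi).abs.ennreal_ofReal
  have hfin : (∫⁻ θ in Set.Ioc (0:ℝ) (2*Real.pi), G θ) < ⊤ := by
    rw [hG, lintegral_add_left measurable_const, lintegral_const_mul _
      (by exact (measurable_id.sub_const Real.pi).abs.ennreal_ofReal.pow measurable_const)]
    have e1 : (∫⁻ θ in Set.Ioc (0:ℝ) (2*Real.pi), (ENNReal.ofReal |θ - Real.pi|) ^ (-s))
        = ∫⁻ θ in Set.Ioc (0:ℝ) (2*Real.pi), ENNReal.ofReal (|θ - Real.pi| ^ (-s)) := by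
      apply lintegral_congr_ae
      have hne : ∀ᵐ θ ∂(volume.restrict (Set.Ioc (0:ℝ) (2*Real.pi))), θ ≠ Real.pi := by
        apply ae_restrict_of_ae
        refine ae_iff.mpr ?_
        simp
      filter_upwards [hne] with θ hθ
      rw [ENNReal.ofReal_rpow_of_pos (abs_pos.mpr (sub_ne_zero.mpr hθ))]
    rw [e1]
    have h2 : (∫⁻ θ in Set.Ioc (0:ℝ) (2*Real.pi), ENNReal.ofReal (|θ - Real.pi| ^ (-s))) < ⊤ :=
      (integrableOn_abs_rpow hs0 hs1).setLIntegral_lt_top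
    have h3 : (∫⁻ _ in Set.Ioc (0:ℝ) (2*Real.pi), (4:ℝ≥0∞)) < ⊤ := by
      rw [setLIntegral_const]
      refine ENNReal.mul_lt_top (by norm_num) ?_
      rw [Real.volume_Ioc]
      exact ENNReal.ofReal_lt_top
    exact ENNReal.add_lt_top.mpr ⟨h3, ENNReal.mul_lt_top (by norm_num) h2⟩
  refine lt_of_le_of_lt ?_ hfin
  refine iSup₂_le fun r hr => ?_
  refine setLIntegral_mono hGmeas fun θ hθ => ?_
  exact key hq1 hε h hr.1 hr.2 hθ
end

section
/- Define p : [0,2π] → [2,3] by p(θ) = 3 for θ ∈ [0,π/3] ∪ [5π/3,2π], p(θ) = cos θ + 5/2 for θ ∈ (π/3,2π/3) ∪ (4π/3,5π/3), and p(θ) = 2 for θ ∈ [2π/3,4π/3]. Let 2 < q ≤ 3 and ε > 0 satisfy 1/q + ε < 1/2. Then sup_{0≤r<1} ∫₀^{2π} |1 − re^{iθ}|^{−(1/q+ε)·p(θ)} dθ = ∞; i.e., the analytic function g(z) = (1−z)^{−1/q−ε} does not belong to the variable exponent Hardy space H^{p(·)}(𝔻). -/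
open MeasureTheory Complex
open scoped ENNReal Topology
open Filter Set

lemma key_s12 (a δ : ℝ) (ha : 1/3 < a) (hδ : 0 < δ) (hδ2 : δ < 1/2) :
    ENNReal.ofReal ((3:ℝ) ^ (-(3*a)) * ((δ ^ (1-3*a) - (1/2:ℝ) ^ (1-3*a)) / (3*a - 1))) ≤
      ∫⁻ θ in Set.Ioc (0:ℝ) (2*Real.pi),
        ENNReal.ofReal
          (‖1 - ((1-δ : ℝ) : ℂ) * Complex.exp (θ * Complex.I)‖
            ^ (-(a * pEx θ))) := by
  set α := 3*a with hα
  have hα1 : 1 < α := by rw [hα]; linarith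
  have hsub : Set.Ioc δ (1/2 : ℝ) ⊆ Set.Ioc (0:ℝ) (2*Real.pi) := by
    intro x hx
    have hπ := Real.pi_gt_three
    exact ⟨lt_trans hδ hx.1, le_trans hx.2 (by linarith)⟩
  refine le_trans ?_ (lintegral_mono_set hsub)
  -- pointwise lower bound on Ioc δ (1/2)
  have hpoint : ∀ θ ∈ Set.Ioc δ (1/2:ℝ),
      ENNReal.ofReal ((3*θ) ^ (-α)) ≤
      ENNReal.ofReal
          (‖1 - ((1-δ : ℝ) : ℂ) * Complex.exp (θ * Complex.I)‖
            ^ (-(a * pEx θ))) := by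
    intro θ hθ
    have hθ0 : 0 < θ := lt_trans hδ hθ.1
    have hθhalf : θ ≤ 1/2 := hθ.2
    have hπ := Real.pi_gt_three
    have hp : pEx θ = 3 := by
      unfold pEx; rw [if_pos (by linarith)]
    rw [hp]
    have hexp : a * 3 = α := by rw [hα]; ring
    rw [hexp]
    set A := ‖1 - ((1-δ : ℝ) : ℂ) * Complex.exp (θ * Complex.I)‖ with hA
    have habsE : ‖Complex.exp ((θ:ℂ) * Complex.I)‖ = 1 :=
      Complex.norm_exp_ofReal_mul_I θ
    have hApos : 0 < A := by
      have h1 := norm_sub_norm_le (1:ℂ) (((1-δ : ℝ) : ℂ) * Complex.exp (θ * Complex.I))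
      have h2 : ‖((1-δ : ℝ) : ℂ) * Complex.exp (θ * Complex.I)‖ = 1 - δ := by
        rw [norm_mul, habsE, Complex.norm_real, Real.norm_eq_abs, _root_.abs_of_nonneg (by linarith), mul_one]
      have h3 : ‖(1:ℂ)‖ = 1 := norm_one
      rw [h2, h3] at h1
      have : A = ‖1 - ((1-δ : ℝ) : ℂ) * Complex.exp (θ * Complex.I)‖ := hA
      linarith
    have hAle : A ≤ 3*θ := by
      have hsplit : (1 : ℂ) - ((1-δ : ℝ) : ℂ) * Complex.exp (θ * Complex.I)
          = ((δ : ℝ) : ℂ) + ((1-δ : ℝ) : ℂ) * (1 - Complex.exp (θ * Complex.I)) := by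
        push_cast; ring
      have habs1 : ‖1 - Complex.exp ((θ:ℂ) * Complex.I)‖ ≤ 2*θ := by
        have hx : ‖(θ:ℂ) * Complex.I‖ ≤ 1 := by
          rw [norm_mul, Complex.norm_I, Complex.norm_real, Real.norm_eq_abs, mul_one,
            _root_.abs_of_nonneg hθ0.le]; linarith
        have := Complex.norm_exp_sub_one_le hx
        rw [norm_mul, Complex.norm_I, Complex.norm_real, Real.norm_eq_abs, mul_one,
          _root_.abs_of_nonneg hθ0.le] at this
        calc ‖1 - Complex.exp ((θ:ℂ) * Complex.I)‖
            = ‖Complex.exp ((θ:ℂ) * Complex.I) - 1‖ := norm_sub_rev _ _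
          _ ≤ 2*θ := this
      calc A = ‖((δ : ℝ) : ℂ) + ((1-δ : ℝ) : ℂ) * (1 - Complex.exp (θ * Complex.I))‖ := by
            rw [hA, hsplit]
        _ ≤ ‖((δ : ℝ) : ℂ)‖
            + ‖((1-δ : ℝ) : ℂ) * (1 - Complex.exp (θ * Complex.I))‖ :=
            norm_add_le _ _
        _ ≤ δ + 1 * (2*θ) := by
            simp only [norm_mul, Complex.norm_real, Real.norm_eq_abs]
            rw [_root_.abs_of_nonneg hδ.le]
            have hb1 : |1 - δ| ≤ 1 := by
              rw [_root_.abs_of_nonneg (by linarith)]; linarith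
            have := mul_le_mul hb1 habs1 (norm_nonneg _) zero_le_one
            linarith
        _ ≤ 3*θ := by nlinarith [hθ.1]
    exact ENNReal.ofReal_le_ofReal
      (Real.rpow_le_rpow_of_nonpos hApos hAle (by linarith))
  refine le_trans ?_ (setLIntegral_mono' measurableSet_Ioc hpoint)
  -- compute the lower integral
  have hint : IntegrableOn (fun θ : ℝ => (3*θ) ^ (-α)) (Set.Ioc δ (1/2:ℝ)) := by
    refine IntegrableOn.mono_set ?_ Set.Ioc_subset_Icc_self
    apply ContinuousOn.integrableOn_Icc
    apply ContinuousOn.rpow_const (by fun_prop)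
    intro x hx
    exact Or.inl (by nlinarith [hx.1])
  have hnn : 0 ≤ᵐ[volume.restrict (Set.Ioc δ (1/2:ℝ))] fun θ : ℝ => (3*θ) ^ (-α) := by
    filter_upwards [self_mem_ae_restrict measurableSet_Ioc] with x hx
    exact Real.rpow_nonneg (by nlinarith [hx.1]) _
  rw [← MeasureTheory.ofReal_integral_eq_lintegral_ofReal hint hnn]
  apply ENNReal.ofReal_le_ofReal
  have hδhalf : δ ≤ (1/2:ℝ) := hδ2.le
  have hIoc : ∫ θ in Set.Ioc δ (1/2:ℝ), (3*θ) ^ (-α)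
      = ∫ θ in δ..(1/2:ℝ), (3*θ) ^ (-α) := (intervalIntegral.integral_of_le hδhalf).symm
  rw [hIoc]
  have hcongr : ∫ θ in δ..(1/2:ℝ), (3*θ) ^ (-α)
      = ∫ θ in δ..(1/2:ℝ), (3:ℝ) ^ (-α) * θ ^ (-α) := by
    apply intervalIntegral.integral_congr
    intro x hx
    rw [Set.uIcc_of_le hδhalf] at hx
    exact Real.mul_rpow (by norm_num) (by linarith [hx.1])
  rw [hcongr, intervalIntegral.integral_const_mul]
  have hrpow : ∫ θ in δ..(1/2:ℝ), θ ^ (-α)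
      = ((1/2:ℝ) ^ (-α+1) - δ ^ (-α+1)) / (-α+1) := by
    apply integral_rpow
    refine Or.inr ⟨by intro hc; have : α = 1 := neg_injective hc; linarith, ?_⟩
    rw [Set.uIcc_of_le hδhalf]
    intro hc
    exact absurd hc.1 (by linarith)
  rw [hrpow]
  have he : -α+1 = 1-α := by ring
  rw [he]
  have hne : (1:ℝ) - α ≠ 0 := by intro hc; linarith [hα1]
  have hne2 : α - 1 ≠ 0 := by intro hc; linarith [hα1]
  have : ((1/2:ℝ) ^ (1-α) - δ ^ (1-α)) / (1-α) = (δ ^ (1-α) - (1/2:ℝ) ^ (1-α)) / (α - 1) := by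
    rw [div_eq_div_iff hne hne2]; ring
  rw [this]


/-- for `2 < q ≤ 3` and `ε > 0` with `1/q + ε < 1/2`,
`sup_{0 ≤ r < 1} ∫₀^{2π} |1 - re^{iθ}|^{-(1/q+ε) p(θ)} dθ = ∞`, i.e. the analytic
function `g(z) = (1-z)^{-1/q-ε}` does not belong to `H^{p(·)}(𝔻)` for the exponent
`pEx`. -/
theorem stmt12 (q ε : ℝ) (hq1 : 2 < q) (hq2 : q ≤ 3) (hε : 0 < ε)
    (h : 1/q + ε < 1/2) :
    (⨆ r ∈ Set.Ico (0:ℝ) 1,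
      ∫⁻ θ in Set.Ioc (0:ℝ) (2*Real.pi),
        ENNReal.ofReal
          (‖1 - (r : ℂ) * Complex.exp (θ * Complex.I)‖
            ^ (-((1/q + ε) * pEx θ)))) = ⊤ := by
  set a := 1/q + ε with haa
  have hq0 : 0 < q := by linarith
  have ha : 1/3 < a := by
    have : 1/3 ≤ 1/q := one_div_le_one_div_of_le hq0 hq2
    rw [haa]; linarith
  set α := 3*a with hαa
  clear_value a
  clear_value α
  have hα1 : 1 < α := by rw [hαa]; linarith
  rw [iSup_eq_top]
  intro b hb
  -- tendsto of the lower bound to infinity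
  have htend : Tendsto (fun δ : ℝ => δ ^ (1 - α)) (𝓝[>] (0:ℝ)) atTop := by
    have h1 : Tendsto (fun x : ℝ => (x⁻¹) ^ (α - 1)) (𝓝[>] (0:ℝ)) atTop :=
      (tendsto_rpow_atTop (by linarith)).comp tendsto_inv_nhdsGT_zero
    refine h1.congr' ?_
    filter_upwards [self_mem_nhdsWithin] with x hx
    have hx0 : (0:ℝ) < x := hx
    rw [Real.inv_rpow hx0.le, ← Real.rpow_neg hx0.le, show -(α - 1) = 1 - α by ring]
  have hV : Tendsto (fun δ : ℝ =>
      (3:ℝ) ^ (-α) * ((δ ^ (1-α) - (1/2:ℝ) ^ (1-α)) / (α - 1))) (𝓝[>] (0:ℝ)) atTop := by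
    have hc : (0:ℝ) < (3:ℝ) ^ (-α) / (α - 1) := by
      apply div_pos (Real.rpow_pos_of_pos (by norm_num) _) (by linarith)
    have h2 : Tendsto (fun δ : ℝ =>
        ((3:ℝ) ^ (-α) / (α - 1)) * δ ^ (1-α)
          + (-((3:ℝ) ^ (-α) * (1/2:ℝ) ^ (1-α) / (α - 1)))) (𝓝[>] (0:ℝ)) atTop :=
      tendsto_atTop_add_const_right _ _ (htend.const_mul_atTop hc)
    refine h2.congr fun x => ?_
    have hne : α - 1 ≠ 0 := by intro hc'; linarith
    field_simp
    ring
  have hmem : Set.Ioo (0:ℝ) (1/2) ∈ 𝓝[>] (0:ℝ) :=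
    Ioo_mem_nhdsGT_of_mem ⟨le_refl _, by norm_num⟩
  obtain ⟨δ, hδb, hδmem⟩ :=
    ((hV.eventually_gt_atTop b.toReal).and (eventually_of_mem hmem fun x hx => hx)).exists
  refine ⟨1 - δ, ?_⟩
  have hmem' : (1 - δ) ∈ Set.Ico (0:ℝ) 1 := ⟨by linarith [hδmem.2], by linarith [hδmem.1]⟩
  rw [iSup_pos hmem']
  calc b < ENNReal.ofReal ((3:ℝ) ^ (-(3*a)) * ((δ ^ (1-3*a) - (1/2:ℝ) ^ (1-3*a)) / (3*a - 1))) := by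
        rw [ENNReal.lt_ofReal_iff_toReal_lt hb.ne]
        rw [← hαa]; exact hδb
    _ ≤ _ := key_s12 a δ ha hδmem.1 hδmem.2
end
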